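/- Let (ζ_j^{(1)})_{j≥0}, (ζ_j^{(2)})_{j≥0} be jointly independent standard Gaussian random variables and set S_q = (T−t)/2 · (ζ_0^{(1)} ζ_0^{(2)} + ∑_{j=1}^q (1/√(4j²−1)) (ζ_{j−1}^{(1)} ζ_j^{(2)} − ζ_j^{(1)} ζ_{j−1}^{(2)})). Then the sequence (S_q)_{q≥1} is Cauchy in L²(Ω), and for p < q, E[(S_q − S_p)²] = ((T−t)²/2) ∑_{j=p+1}^q 1/(4j²−1). -/

import Mathlib

open MeasureTheory ProbabilityTheory Filter

open Real
open scoped ENNReal NNReal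

lemma my_pdf01 (x : ℝ) :
    gaussianPDFReal 0 1 x = (Real.sqrt (2*π))⁻¹ * Real.exp (-(1/2) * x^2) := by
  simp only [gaussianPDFReal, NNReal.coe_one, mul_one, sub_zero]
  congr 1
  ring

lemma my_gauss_eq : gaussianReal 0 1
    = MeasureTheory.volume.withDensity (fun x => ((Real.toNNReal (gaussianPDFReal 0 1 x) : ℝ≥0) : ℝ≥0∞)) := by
  rw [gaussianReal_of_var_ne_zero 0 one_ne_zero]
  rfl

lemma my_integrable_iff (g : ℝ → ℝ) :
    Integrable g (gaussianReal 0 1) ↔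
      Integrable (fun x => gaussianPDFReal 0 1 x * g x) := by
  rw [my_gauss_eq, integrable_withDensity_iff_integrable_smul
    (measurable_gaussianPDFReal 0 1).real_toNNReal]
  constructor <;> intro h <;> refine h.congr (Filter.Eventually.of_forall fun x => ?_) <;>
    simp [NNReal.smul_def, Real.coe_toNNReal _ (gaussianPDFReal_nonneg 0 1 x)]

lemma my_integral_eq (g : ℝ → ℝ) :
    ∫ x, g x ∂(gaussianReal 0 1) = ∫ x, gaussianPDFReal 0 1 x * g x := by
  rw [my_gauss_eq, integral_withDensity_eq_integral_smul
    (measurable_gaussianPDFReal 0 1).real_toNNReal]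
  congr 1
  funext x
  simp [NNReal.smul_def, Real.coe_toNNReal _ (gaussianPDFReal_nonneg 0 1 x)]

lemma my_integrable_pow (n : ℕ) :
    Integrable (fun x : ℝ => x ^ n) (gaussianReal 0 1) := by
  rw [my_integrable_iff]
  have hbase : Integrable (fun x : ℝ => x ^ n * Real.exp (-(1/2) * x ^ 2)) := by
    have := integrable_rpow_mul_exp_neg_mul_sq (b := 1/2) (s := n) one_half_pos
      (neg_one_lt_zero.trans_le (Nat.cast_nonneg n))
    simpa [Real.rpow_natCast] using this
  have hmeas : Measurable (fun x : ℝ => gaussianPDFReal 0 1 x * x ^ n) :=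
    (measurable_gaussianPDFReal 0 1).mul (measurable_id.pow_const n)
  refine (hbase.abs.const_mul ((Real.sqrt (2*π))⁻¹)).mono' hmeas.aestronglyMeasurable
    (Filter.Eventually.of_forall fun x => ?_)
  rw [my_pdf01]
  have hc : (0:ℝ) ≤ (Real.sqrt (2*π))⁻¹ := by positivity
  have he : (0:ℝ) < Real.exp (-(1/2) * x^2) := Real.exp_pos _
  have : ‖(Real.sqrt (2*π))⁻¹ * Real.exp (-(1/2) * x^2) * x ^ n‖
      = (Real.sqrt (2*π))⁻¹ * |x ^ n * Real.exp (-(1/2) * x ^ 2)| := by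
    rw [Real.norm_eq_abs, abs_mul, abs_mul, abs_mul, abs_of_nonneg hc, abs_of_pos he]
    ring
  rw [this]

lemma my_mean : ∫ x, x ∂(gaussianReal 0 1) = 0 := by
  have hmap : Measure.map (fun x : ℝ => (-1 : ℝ) * x) (gaussianReal 0 1) = gaussianReal 0 1 := by
    have := gaussianReal_map_const_mul (μ := 0) (v := 1) (-1)
    simpa using this
  have h1 : ∫ x, x ∂(gaussianReal 0 1)
      = ∫ x, x ∂(Measure.map (fun x : ℝ => (-1:ℝ) * x) (gaussianReal 0 1)) := by rw [hmap]
  have h2 : ∫ x, (fun y : ℝ => y) x ∂(Measure.map (fun x : ℝ => (-1:ℝ) * x) (gaussianReal 0 1))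
      = ∫ x, (-1:ℝ) * x ∂(gaussianReal 0 1) :=
    integral_map ((measurable_id.const_mul _).aemeasurable) measurable_id.aestronglyMeasurable
  simp only [neg_one_mul] at h1 h2
  rw [h2] at h1
  rw [integral_neg] at h1
  linarith

lemma my_second_moment : ∫ x, x ^ 2 ∂(gaussianReal 0 1) = 1 := by
  rw [my_integral_eq]
  have h1 : ∀ x : ℝ, gaussianPDFReal 0 1 x * x ^ 2
      = (Real.sqrt (2*π))⁻¹ * (x ^ 2 * Real.exp (-(1/2) * x ^ 2)) := by
    intro x; rw [my_pdf01]; ring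
  simp_rw [h1, integral_const_mul]
  have h2 : ∫ x : ℝ, x ^ 2 * Real.exp (-(1/2) * x ^ 2)
      = 2 * ∫ x in Set.Ioi (0:ℝ), x ^ 2 * Real.exp (-(1/2) * x ^ 2) := by
    rw [← integral_comp_abs (f := fun x => x ^ 2 * Real.exp (-(1/2) * x ^ 2))]
    congr 1
    funext x
    simp [sq_abs]
  rw [h2]
  have h3 : ∫ x in Set.Ioi (0:ℝ), x ^ 2 * Real.exp (-(1/2) * x ^ 2)
      = ((1:ℝ)/2) ^ (-(((2:ℝ) + 1)) / 2) * (1 / 2) * Real.Gamma (((2:ℝ) + 1) / 2) := by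
    rw [← integral_rpow_mul_exp_neg_mul_rpow (p := 2) (q := 2) (b := 1/2)
      (by norm_num) (by norm_num) (by norm_num)]
    refine setIntegral_congr_fun measurableSet_Ioi fun x hx => ?_
    rw [show ((2:ℝ)) = ((2:ℕ):ℝ) by norm_num, Real.rpow_natCast]
  rw [h3]
  have hG : Real.Gamma (((2:ℝ) + 1) / 2) = Real.sqrt π / 2 := by
    have h : ((2:ℝ) + 1) / 2 = 1/2 + 1 := by norm_num
    rw [h, Real.Gamma_add_one (by norm_num), Real.Gamma_one_half_eq]
    ring
  rw [hG]
  have hb : ((1:ℝ)/2) ^ (-(((2:ℝ) + 1)) / 2) = 2 * Real.sqrt 2 := by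
    rw [show ((1:ℝ)/2) = (2:ℝ)⁻¹ by norm_num,
      Real.inv_rpow (by norm_num : (0:ℝ) ≤ 2), ← Real.rpow_neg (by norm_num)]
    rw [show (-(-(((2:ℝ) + 1)) / 2)) = 1 + 1/2 by norm_num,
      Real.rpow_add (by norm_num), Real.rpow_one, ← Real.sqrt_eq_rpow]
  rw [hb, Real.sqrt_mul (by norm_num : (0:ℝ) ≤ 2) π]
  have hs2 : (0:ℝ) < Real.sqrt 2 := Real.sqrt_pos.mpr (by norm_num)
  have hsπ : (0:ℝ) < Real.sqrt π := Real.sqrt_pos.mpr Real.pi_pos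
  field_simp

section Aux
variable {Ω : Type*} [MeasureSpace Ω] [IsProbabilityMeasure (ℙ : Measure Ω)]

lemma my_int_pow {X : Ω → ℝ} (hX : Measurable X)
    (hg : Measure.map X ℙ = gaussianReal 0 1) (n : ℕ) :
    Integrable (fun ω => X ω ^ n) ℙ := by
  have h1 : Integrable (fun x : ℝ => x ^ n) (Measure.map X ℙ) := by
    rw [hg]; exact my_integrable_pow n
  exact (integrable_map_measure (measurable_id.pow_const n).aestronglyMeasurable
    hX.aemeasurable).mp h1

lemma my_moment1 {X : Ω → ℝ} (hX : Measurable X)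
    (hg : Measure.map X ℙ = gaussianReal 0 1) :
    ∫ ω, X ω ∂ℙ = 0 := by
  have h1 : ∫ x, (fun y : ℝ => y) x ∂(Measure.map X ℙ) = ∫ ω, X ω ∂ℙ :=
    integral_map hX.aemeasurable measurable_id.aestronglyMeasurable
  rw [← h1, hg, my_mean]

lemma my_moment2 {X : Ω → ℝ} (hX : Measurable X)
    (hg : Measure.map X ℙ = gaussianReal 0 1) :
    ∫ ω, X ω ^ 2 ∂ℙ = 1 := by
  have h1 : ∫ x, (fun y : ℝ => y ^ 2) x ∂(Measure.map X ℙ) = ∫ ω, X ω ^ 2 ∂ℙ :=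
    integral_map hX.aemeasurable (measurable_id.pow_const 2).aestronglyMeasurable
  rw [← h1, hg, my_second_moment]

end Aux

section Aux2
variable {Ω : Type*} [MeasureSpace Ω] [IsProbabilityMeasure (ℙ : Measure Ω)]

lemma my_prod_key {ι : Type*} {f : ι → Ω → ℝ}
    (hindep : iIndepFun f ℙ)
    (hmeas : ∀ i, Measurable (f i))
    (hint : ∀ i (n : ℕ), Integrable (fun ω => f i ω ^ n) ℙ)
    (e : ι → ℕ) (s : Finset ι) :
    Integrable (fun ω => ∏ p ∈ s, f p ω ^ e p) ℙ ∧
    (∫ ω, ∏ p ∈ s, f p ω ^ e p ∂ℙ) = ∏ p ∈ s, ∫ ω, f p ω ^ e p ∂ℙ := by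
  classical
  set g : ι → Ω → ℝ := fun i ω => f i ω ^ e i with hg
  have hgindep : iIndepFun g ℙ :=
    hindep.comp (fun i x => x ^ e i) (fun i => measurable_id.pow_const _)
  have hgmeas : ∀ i, Measurable (g i) := fun i => (hmeas i).pow_const _
  induction s using Finset.induction_on with
  | empty => simp
  | insert a s' ha ih =>
    have hIndep : IndepFun (∏ j ∈ s', g j) (g a) ℙ :=
      hgindep.indepFun_finsetProd_of_notMem hgmeas ha
    have hprodeq : (fun ω => ∏ p ∈ s', f p ω ^ e p) = (∏ j ∈ s', g j) := by
      funext ω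
      rw [Finset.prod_apply]
    have hfun : (fun ω => ∏ p ∈ insert a s', f p ω ^ e p) = (∏ j ∈ s', g j) * g a := by
      funext ω
      rw [Finset.prod_insert ha, Pi.mul_apply, Finset.prod_apply]
      exact mul_comm _ _
    have hintprod : Integrable (∏ j ∈ s', g j) ℙ := hprodeq ▸ ih.1
    constructor
    · rw [hfun]
      exact hIndep.integrable_mul hintprod (hint a (e a))
    · have hI : ∫ ω, ((∏ j ∈ s', g j) * g a) ω ∂ℙ
          = (∫ ω, (∏ j ∈ s', g j) ω ∂ℙ) * ∫ ω, g a ω ∂ℙ :=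
        hIndep.integral_mul_eq_mul_integral hintprod.aestronglyMeasurable
          (hint a (e a)).aestronglyMeasurable
      rw [hfun, hI, ← hprodeq, ih.2, Finset.prod_insert ha]
      exact (mul_comm _ _)

end Aux2

section Aux3
variable {Ω : Type*} [MeasureSpace Ω] [IsProbabilityMeasure (ℙ : Measure Ω)]

lemma my_mono (ζ : Fin 2 → ℕ → Ω → ℝ)
    (hmeas : ∀ i j, Measurable (ζ i j))
    (hindep : iIndepFun
      (fun p : Fin 2 × ℕ => ζ p.1 p.2) ℙ)
    (hgauss : ∀ i j, Measure.map (ζ i j) ℙ = gaussianReal 0 1)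
    (a b c d : ℕ) :
    Integrable (fun ω => ζ 0 a ω * ζ 1 b ω * (ζ 0 c ω * ζ 1 d ω)) ℙ ∧
    (∫ ω, ζ 0 a ω * ζ 1 b ω * (ζ 0 c ω * ζ 1 d ω) ∂ℙ)
      = if a = c ∧ b = d then 1 else 0 := by
  classical
  set f : Fin 2 × ℕ → Ω → ℝ := fun p => ζ p.1 p.2 with hf
  have hfm : ∀ p, Measurable (f p) := fun p => hmeas p.1 p.2
  have hfint : ∀ (p : Fin 2 × ℕ) (n : ℕ), Integrable (fun ω => f p ω ^ n) ℙ :=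
    fun p n => my_int_pow (hmeas p.1 p.2) (hgauss p.1 p.2) n
  have hm1 : ∀ p : Fin 2 × ℕ, ∫ ω, f p ω ^ 1 ∂ℙ = 0 := by
    intro p; simp only [pow_one]; exact my_moment1 (hmeas p.1 p.2) (hgauss p.1 p.2)
  have hm2 : ∀ p : Fin 2 × ℕ, ∫ ω, f p ω ^ 2 ∂ℙ = 1 :=
    fun p => my_moment2 (hmeas p.1 p.2) (hgauss p.1 p.2)
  have key := my_prod_key hindep hfm hfint
  by_cases hac : a = c
  · by_cases hbd : b = d
    · subst hac; subst hbd
      have hne : ((0 : Fin 2), a) ≠ ((1 : Fin 2), b) := by simp [Prod.ext_iff]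
      have hfun : (fun ω => ζ 0 a ω * ζ 1 b ω * (ζ 0 a ω * ζ 1 b ω))
          = fun ω => ∏ p ∈ ({((0:Fin 2), a), ((1:Fin 2), b)} : Finset (Fin 2 × ℕ)),
              f p ω ^ (2 : ℕ) := by
        funext ω
        rw [Finset.prod_pair hne]
        simp only [hf]
        ring
      rw [hfun]
      refine ⟨(key (fun _ => 2) _).1, ?_⟩
      rw [(key (fun _ => 2) _).2, Finset.prod_pair hne, hm2, hm2]
      simp
    · subst hac
      set e : Fin 2 × ℕ → ℕ := fun p => if p = ((0:Fin 2), a) then 2 else 1 with he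
      set s : Finset (Fin 2 × ℕ) := {((0:Fin 2), a), ((1:Fin 2), b), ((1:Fin 2), d)} with hs
      have h1 : ((0:Fin 2), a) ∉ ({((1:Fin 2), b), ((1:Fin 2), d)} : Finset (Fin 2 × ℕ)) := by
        simp [Prod.ext_iff]
      have h2 : ((1:Fin 2), b) ∉ ({((1:Fin 2), d)} : Finset (Fin 2 × ℕ)) := by
        simp [Prod.ext_iff, hbd]
      have hfun : (fun ω => ζ 0 a ω * ζ 1 b ω * (ζ 0 a ω * ζ 1 d ω))
          = fun ω => ∏ p ∈ s, f p ω ^ e p := by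
        funext ω
        rw [hs, show ({((0:Fin 2), a), ((1:Fin 2), b), ((1:Fin 2), d)} : Finset (Fin 2 × ℕ))
          = insert ((0:Fin 2), a) (insert ((1:Fin 2), b) {((1:Fin 2), d)}) from rfl,
          Finset.prod_insert h1, Finset.prod_insert h2, Finset.prod_singleton]
        have hne0b : ((1:Fin 2), b) ≠ ((0:Fin 2), a) := by simp [Prod.ext_iff]
        have hne0d : ((1:Fin 2), d) ≠ ((0:Fin 2), a) := by simp [Prod.ext_iff]
        simp only [he, hf, if_pos rfl, if_neg hne0b, if_neg hne0d, pow_one]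
        ring
      rw [hfun]
      refine ⟨(key e s).1, ?_⟩
      rw [(key e s).2, hs, show ({((0:Fin 2), a), ((1:Fin 2), b), ((1:Fin 2), d)} :
          Finset (Fin 2 × ℕ))
        = insert ((0:Fin 2), a) (insert ((1:Fin 2), b) {((1:Fin 2), d)}) from rfl,
        Finset.prod_insert h1, Finset.prod_insert h2, Finset.prod_singleton]
      have hne0b : ((1:Fin 2), b) ≠ ((0:Fin 2), a) := by simp [Prod.ext_iff]
      have hne0d : ((1:Fin 2), d) ≠ ((0:Fin 2), a) := by simp [Prod.ext_iff]
      have e1 : e ((0:Fin 2), a) = 2 := if_pos rfl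
      have e2 : e ((1:Fin 2), b) = 1 := if_neg hne0b
      have e3 : e ((1:Fin 2), d) = 1 := if_neg hne0d
      rw [e1, e2, e3, hm2, hm1, hm1]
      simp [hbd]
  · by_cases hbd : b = d
    · subst hbd
      set e : Fin 2 × ℕ → ℕ := fun p => if p = ((1:Fin 2), b) then 2 else 1 with he
      set s : Finset (Fin 2 × ℕ) := {((1:Fin 2), b), ((0:Fin 2), a), ((0:Fin 2), c)} with hs
      have h1 : ((1:Fin 2), b) ∉ ({((0:Fin 2), a), ((0:Fin 2), c)} : Finset (Fin 2 × ℕ)) := by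
        simp [Prod.ext_iff]
      have h2 : ((0:Fin 2), a) ∉ ({((0:Fin 2), c)} : Finset (Fin 2 × ℕ)) := by
        simp [Prod.ext_iff, hac]
      have hne0a : ((0:Fin 2), a) ≠ ((1:Fin 2), b) := by simp [Prod.ext_iff]
      have hne0c : ((0:Fin 2), c) ≠ ((1:Fin 2), b) := by simp [Prod.ext_iff]
      have hfun : (fun ω => ζ 0 a ω * ζ 1 b ω * (ζ 0 c ω * ζ 1 b ω))
          = fun ω => ∏ p ∈ s, f p ω ^ e p := by
        funext ω
        rw [hs, show ({((1:Fin 2), b), ((0:Fin 2), a), ((0:Fin 2), c)} : Finset (Fin 2 × ℕ))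
          = insert ((1:Fin 2), b) (insert ((0:Fin 2), a) {((0:Fin 2), c)}) from rfl,
          Finset.prod_insert h1, Finset.prod_insert h2, Finset.prod_singleton]
        simp only [he, hf, if_pos rfl, if_neg hne0a, if_neg hne0c, pow_one]
        ring
      rw [hfun]
      refine ⟨(key e s).1, ?_⟩
      rw [(key e s).2, hs, show ({((1:Fin 2), b), ((0:Fin 2), a), ((0:Fin 2), c)} :
          Finset (Fin 2 × ℕ))
        = insert ((1:Fin 2), b) (insert ((0:Fin 2), a) {((0:Fin 2), c)}) from rfl,
        Finset.prod_insert h1, Finset.prod_insert h2, Finset.prod_singleton]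
      have e1 : e ((1:Fin 2), b) = 2 := if_pos rfl
      have e2 : e ((0:Fin 2), a) = 1 := if_neg hne0a
      have e3 : e ((0:Fin 2), c) = 1 := if_neg hne0c
      rw [e1, e2, e3, hm2, hm1, hm1]
      simp [hac]
    · set s : Finset (Fin 2 × ℕ) :=
        {((0:Fin 2), a), ((1:Fin 2), b), ((0:Fin 2), c), ((1:Fin 2), d)} with hs
      have h1 : ((0:Fin 2), a) ∉ ({((1:Fin 2), b), ((0:Fin 2), c), ((1:Fin 2), d)} :
          Finset (Fin 2 × ℕ)) := by simp [Prod.ext_iff, hac]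
      have h2 : ((1:Fin 2), b) ∉ ({((0:Fin 2), c), ((1:Fin 2), d)} :
          Finset (Fin 2 × ℕ)) := by simp [Prod.ext_iff, hbd]
      have h3 : ((0:Fin 2), c) ∉ ({((1:Fin 2), d)} : Finset (Fin 2 × ℕ)) := by
        simp [Prod.ext_iff]
      have hfun : (fun ω => ζ 0 a ω * ζ 1 b ω * (ζ 0 c ω * ζ 1 d ω))
          = fun ω => ∏ p ∈ s, f p ω ^ (1 : ℕ) := by
        funext ω
        rw [hs, show ({((0:Fin 2), a), ((1:Fin 2), b), ((0:Fin 2), c), ((1:Fin 2), d)} :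
            Finset (Fin 2 × ℕ))
          = insert ((0:Fin 2), a) (insert ((1:Fin 2), b)
              (insert ((0:Fin 2), c) {((1:Fin 2), d)})) from rfl,
          Finset.prod_insert h1, Finset.prod_insert h2, Finset.prod_insert h3,
          Finset.prod_singleton]
        simp only [hf, pow_one]
        ring
      rw [hfun]
      refine ⟨(key (fun _ => 1) s).1, ?_⟩
      rw [(key (fun _ => 1) s).2, hs, show ({((0:Fin 2), a), ((1:Fin 2), b), ((0:Fin 2), c),
          ((1:Fin 2), d)} : Finset (Fin 2 × ℕ))
        = insert ((0:Fin 2), a) (insert ((1:Fin 2), b)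
            (insert ((0:Fin 2), c) {((1:Fin 2), d)})) from rfl,
        Finset.prod_insert h1, Finset.prod_insert h2, Finset.prod_insert h3,
        Finset.prod_singleton, hm1, hm1, hm1, hm1]
      simp [hac]

end Aux3

lemma my_tele (p : ℕ) : ∀ q : ℕ, p ≤ q →
    ∑ j ∈ Finset.Icc (p + 1) q, (1 : ℝ) / (4 * (j : ℝ) ^ 2 - 1)
      = 1/2 * (1/(2*(p:ℝ)+1) - 1/(2*(q:ℝ)+1)) := by
  intro q hq
  induction q, hq using Nat.le_induction with
  | base => simp [Finset.Icc_eq_empty_of_lt (Nat.lt_succ_self p)]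
  | succ q hq ih =>
    rw [Finset.sum_Icc_succ_top (Nat.succ_le_succ hq), ih]
    have h1 : (0:ℝ) < 2*(q:ℝ)+1 := by positivity
    have h2 : (0:ℝ) < 2*((q:ℝ)+1)+1 := by positivity
    have h3 : 4*((q:ℝ)+1)^2 - 1 = (2*(q:ℝ)+1) * (2*((q:ℝ)+1)+1) := by ring
    push_cast
    rw [h3]
    field_simp
    ring

/-- The truncated Legendre expansions
`S_q = (T−t)/2·(ζ^{(1)}_0 ζ^{(2)}_0 + ∑_{j=1}^q (1/√(4j²−1))(ζ^{(1)}_{j−1}ζ^{(2)}_j −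
ζ^{(1)}_j ζ^{(2)}_{j−1}))` form a Cauchy sequence in `L²(Ω)`, and for `p < q`,
`E[(S_q − S_p)²] = ((T−t)²/2) ∑_{j=p+1}^q 1/(4j²−1)`. -/
theorem truncated_expansion_cauchy_L2
    {Ω : Type*} [MeasureSpace Ω] [IsProbabilityMeasure (ℙ : Measure Ω)]
    (t T : ℝ) (htT : t < T)
    (ζ : Fin 2 → ℕ → Ω → ℝ)
    (hmeas : ∀ i j, Measurable (ζ i j))
    (hindep : iIndepFun
      (fun p : Fin 2 × ℕ => ζ p.1 p.2) ℙ)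
    (hgauss : ∀ i j, Measure.map (ζ i j) ℙ = gaussianReal 0 1)
    (S : ℕ → Ω → ℝ)
    (hS : ∀ q ω, S q ω = (T - t) / 2 * (ζ 0 0 ω * ζ 1 0 ω
      + ∑ j ∈ Finset.Icc 1 q, (1 / Real.sqrt (4 * (j : ℝ) ^ 2 - 1))
          * (ζ 0 (j - 1) ω * ζ 1 j ω - ζ 0 j ω * ζ 1 (j - 1) ω))) :
    (∀ ε : ℝ, 0 < ε → ∃ N : ℕ, ∀ p q : ℕ, N ≤ p → N ≤ q →
        (∫ ω, (S q ω - S p ω) ^ 2) < ε) ∧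
    (∀ p q : ℕ, p < q →
        (∫ ω, (S q ω - S p ω) ^ 2)
          = (T - t) ^ 2 / 2 * ∑ j ∈ Finset.Icc (p + 1) q, (1 : ℝ) / (4 * (j : ℝ) ^ 2 - 1)) := by
  classical
  set cc : ℕ → ℝ := fun j => 1 / Real.sqrt (4 * (j : ℝ) ^ 2 - 1) with hcc_def
  set Y : ℕ → Ω → ℝ := fun j ω => ζ 0 (j - 1) ω * ζ 1 j ω - ζ 0 j ω * ζ 1 (j - 1) ω with hY_def
  have hmono := my_mono ζ hmeas hindep hgauss
  have intY : ∀ j k : ℕ, Integrable (fun ω => Y j ω * Y k ω) ℙ := by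
    intro j k
    have hfun : ∀ ω, (ζ 0 (j-1) ω * ζ 1 j ω * (ζ 0 (k-1) ω * ζ 1 k ω)
          - ζ 0 (j-1) ω * ζ 1 j ω * (ζ 0 k ω * ζ 1 (k-1) ω))
          - (ζ 0 j ω * ζ 1 (j-1) ω * (ζ 0 (k-1) ω * ζ 1 k ω)
          - ζ 0 j ω * ζ 1 (j-1) ω * (ζ 0 k ω * ζ 1 (k-1) ω))
        = Y j ω * Y k ω := by
      intro ω
      simp only [hY_def]
      ring
    exact (Integrable.sub
        (Integrable.sub (hmono (j-1) j (k-1) k).1 (hmono (j-1) j k (k-1)).1)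
        (Integrable.sub (hmono j (j-1) (k-1) k).1 (hmono j (j-1) k (k-1)).1)).congr
      (Filter.Eventually.of_forall hfun)
  have EY : ∀ j k : ℕ, 1 ≤ j → 1 ≤ k →
      (∫ ω, Y j ω * Y k ω ∂ℙ) = if j = k then 2 else 0 := by
    intro j k hj hk
    have hfun : ∀ ω, Y j ω * Y k ω
        = (ζ 0 (j-1) ω * ζ 1 j ω * (ζ 0 (k-1) ω * ζ 1 k ω)
          - ζ 0 (j-1) ω * ζ 1 j ω * (ζ 0 k ω * ζ 1 (k-1) ω))
          - (ζ 0 j ω * ζ 1 (j-1) ω * (ζ 0 (k-1) ω * ζ 1 k ω)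
          - ζ 0 j ω * ζ 1 (j-1) ω * (ζ 0 k ω * ζ 1 (k-1) ω)) := by
      intro ω
      simp only [hY_def]
      ring
    have iAB : Integrable (fun ω => ζ 0 (j-1) ω * ζ 1 j ω * (ζ 0 (k-1) ω * ζ 1 k ω)
        - ζ 0 (j-1) ω * ζ 1 j ω * (ζ 0 k ω * ζ 1 (k-1) ω)) ℙ :=
      (hmono (j-1) j (k-1) k).1.sub (hmono (j-1) j k (k-1)).1
    have iCD : Integrable (fun ω => ζ 0 j ω * ζ 1 (j-1) ω * (ζ 0 (k-1) ω * ζ 1 k ω)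
        - ζ 0 j ω * ζ 1 (j-1) ω * (ζ 0 k ω * ζ 1 (k-1) ω)) ℙ :=
      (hmono j (j-1) (k-1) k).1.sub (hmono j (j-1) k (k-1)).1
    rw [integral_congr_ae (Filter.Eventually.of_forall hfun),
      integral_sub iAB iCD,
      integral_sub (hmono (j-1) j (k-1) k).1 (hmono (j-1) j k (k-1)).1,
      integral_sub (hmono j (j-1) (k-1) k).1 (hmono j (j-1) k (k-1)).1,
      (hmono (j-1) j (k-1) k).2, (hmono (j-1) j k (k-1)).2,
      (hmono j (j-1) (k-1) k).2, (hmono j (j-1) k (k-1)).2]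
    by_cases hjk : j = k
    · subst hjk
      have c2 : ¬(j - 1 = j ∧ j = j - 1) := by omega
      have c3 : ¬(j = j - 1 ∧ j - 1 = j) := by omega
      simp [c2, c3]
      norm_num
    · have c1 : ¬(j - 1 = k - 1 ∧ j = k) := by omega
      have c2 : ¬(j - 1 = k ∧ j = k - 1) := by omega
      have c3 : ¬(j = k - 1 ∧ j - 1 = k) := by omega
      have c4 : ¬(j = k ∧ j - 1 = k - 1) := by omega
      simp [c1, c2, c3, c4, hjk]
  have hval : ∀ p q : ℕ, p < q →
      (∫ ω, (S q ω - S p ω) ^ 2)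
        = (T - t) ^ 2 / 2 * ∑ j ∈ Finset.Icc (p + 1) q, (1 : ℝ) / (4 * (j : ℝ) ^ 2 - 1) := by
    intro p q hpq
    have hdiff : ∀ ω, S q ω - S p ω = (T - t) / 2 * ∑ j ∈ Finset.Ioc p q, cc j * Y j ω := by
      intro ω
      rw [hS, hS]
      have h1 : ∀ n : ℕ, Finset.Icc 1 n = Finset.Ioc 0 n := fun n => Finset.Icc_add_one_left_eq_Ioc 0 n
      have hsplit : ∑ j ∈ Finset.Icc 1 q, cc j * Y j ω
          = ∑ j ∈ Finset.Icc 1 p, cc j * Y j ω + ∑ j ∈ Finset.Ioc p q, cc j * Y j ω := by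
        rw [h1 q, h1 p, Finset.sum_Ioc_consecutive _ (Nat.zero_le p) (le_of_lt hpq)]
      have hterm : ∀ n : ℕ, ∑ j ∈ Finset.Icc 1 n, (1 / Real.sqrt (4 * (j : ℝ) ^ 2 - 1))
          * (ζ 0 (j - 1) ω * ζ 1 j ω - ζ 0 j ω * ζ 1 (j - 1) ω)
          = ∑ j ∈ Finset.Icc 1 n, cc j * Y j ω := fun n => rfl
      rw [hterm q, hterm p, hsplit]
      ring
    have hsq : ∀ ω, (S q ω - S p ω) ^ 2
        = ∑ j ∈ Finset.Ioc p q, ∑ k ∈ Finset.Ioc p q,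
            ((T - t) ^ 2 / 4 * (cc j * cc k)) * (Y j ω * Y k ω) := by
      intro ω
      rw [hdiff ω]
      have h2 : ((T - t) / 2 * ∑ j ∈ Finset.Ioc p q, cc j * Y j ω) ^ 2
          = (T - t) ^ 2 / 4 * ((∑ j ∈ Finset.Ioc p q, cc j * Y j ω)
            * (∑ k ∈ Finset.Ioc p q, cc k * Y k ω)) := by ring
      rw [h2, Finset.sum_mul_sum, Finset.mul_sum]
      refine Finset.sum_congr rfl fun j _ => ?_
      rw [Finset.mul_sum]
      refine Finset.sum_congr rfl fun k _ => ?_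
      ring
    calc ∫ ω, (S q ω - S p ω) ^ 2
        = ∫ ω, ∑ j ∈ Finset.Ioc p q, ∑ k ∈ Finset.Ioc p q,
            ((T - t) ^ 2 / 4 * (cc j * cc k)) * (Y j ω * Y k ω) ∂ℙ :=
          integral_congr_ae (Filter.Eventually.of_forall fun ω => hsq ω)
      _ = ∑ j ∈ Finset.Ioc p q, ∑ k ∈ Finset.Ioc p q,
            ((T - t) ^ 2 / 4 * (cc j * cc k)) * ∫ ω, Y j ω * Y k ω ∂ℙ := by
          rw [integral_finset_sum _ (fun j _ => integrable_finset_sum _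
            (fun k _ => (intY j k).const_mul _))]
          refine Finset.sum_congr rfl fun j _ => ?_
          rw [integral_finset_sum _ (fun k _ => (intY j k).const_mul _)]
          exact Finset.sum_congr rfl fun k _ => integral_const_mul _ _
      _ = ∑ j ∈ Finset.Ioc p q, (T - t) ^ 2 / 2 * (cc j) ^ 2 := by
          refine Finset.sum_congr rfl fun j hj => ?_
          have hj1 : 1 ≤ j := by
            have := (Finset.mem_Ioc.mp hj).1; omega
          rw [Finset.sum_eq_single j]
          · rw [EY j j hj1 hj1, if_pos rfl]
            ring
          · intro k hk hkj
            have hk1 : 1 ≤ k := by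
              have := (Finset.mem_Ioc.mp hk).1; omega
            rw [EY j k hj1 hk1, if_neg (Ne.symm hkj), mul_zero]
          · intro hj'
            exact absurd hj hj'
      _ = (T - t) ^ 2 / 2 * ∑ j ∈ Finset.Icc (p + 1) q, (1 : ℝ) / (4 * (j : ℝ) ^ 2 - 1) := by
          rw [Finset.Icc_add_one_left_eq_Ioc, Finset.mul_sum]
          refine Finset.sum_congr rfl fun j hj => ?_
          have hj1 : 1 ≤ j := by
            have := (Finset.mem_Ioc.mp hj).1; omega
          have hj1' : (1:ℝ) ≤ (j:ℝ) := by exact_mod_cast hj1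
          have hpos : (0:ℝ) ≤ 4 * (j:ℝ) ^ 2 - 1 := by nlinarith
          have : cc j ^ 2 = (1 : ℝ) / (4 * (j : ℝ) ^ 2 - 1) := by
            simp only [hcc_def]
            rw [div_pow, one_pow, Real.sq_sqrt hpos]
          rw [this]
  refine ⟨?_, hval⟩
  intro ε hε
  set C : ℝ := (T - t) ^ 2 / 2 with hC
  have hC0 : 0 < C := by
    have : 0 < T - t := sub_pos.mpr htT
    positivity
  obtain ⟨n, hn⟩ := exists_nat_gt (C / ε)
  refine ⟨n + 1, fun p q hp hq => ?_⟩
  have hCn : C < (n : ℝ) * ε := by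
    rw [div_lt_iff₀ hε] at hn
    exact hn
  have hbound : ∀ p q : ℕ, n + 1 ≤ p → p < q → (∫ ω, (S q ω - S p ω) ^ 2) < ε := by
    intro p q hp hpq
    rw [hval p q hpq, my_tele p q (le_of_lt hpq)]
    have hp1 : (0:ℝ) < 2*(p:ℝ)+1 := by positivity
    have hq1 : (0:ℝ) < 2*(q:ℝ)+1 := by positivity
    have hnp : (n : ℝ) ≤ 2*(p:ℝ)+1 := by
      have : (n : ℝ) ≤ (p : ℝ) := by exact_mod_cast Nat.le_of_succ_le hp
      linarith
    have h2 : 1/2 * (1/(2*(p:ℝ)+1) - 1/(2*(q:ℝ)+1)) ≤ 1/(2*(p:ℝ)+1) := by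
      have h3 : (0:ℝ) < 1/(2*(q:ℝ)+1) := by positivity
      have h4 : (0:ℝ) ≤ 1/(2*(p:ℝ)+1) := by positivity
      linarith
    have h5 : C * (1/2 * (1/(2*(p:ℝ)+1) - 1/(2*(q:ℝ)+1))) ≤ C * (1/(2*(p:ℝ)+1)) :=
      mul_le_mul_of_nonneg_left h2 (le_of_lt hC0)
    have h6 : C * (1/(2*(p:ℝ)+1)) < ε := by
      rw [mul_one_div, div_lt_iff₀ hp1]
      calc C < (n:ℝ) * ε := hCn
        _ ≤ (2*(p:ℝ)+1) * ε := by
            apply mul_le_mul_of_nonneg_right hnp (le_of_lt hε)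
        _ = ε * (2*(p:ℝ)+1) := by ring
    linarith
  rcases lt_trichotomy p q with hpq | hpq | hpq
  · exact hbound p q hp hpq
  · subst hpq
    have : (fun ω : Ω => (S p ω - S p ω) ^ 2) = fun _ => (0:ℝ) := by
      funext ω; ring
    rw [this]
    simpa using hε
  · have hsymm : (∫ ω, (S q ω - S p ω) ^ 2) = ∫ ω, (S p ω - S q ω) ^ 2 := by
      refine integral_congr_ae (Filter.Eventually.of_forall fun ω => ?_)
      ring
    rw [hsymm]
    exact hbound q p hq hpq
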